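/- Let d be a positive integer and let M and G be real symmetric d×d matrices such that M − I is positive semidefinite (M ⪰ I) and G is positive semidefinite with I − G positive semidefinite (all eigenvalues of G are at most 1). Then trace(G · M⁻¹) ≤ 2·(log det(M + G) − log det(M)). -/

import Mathlib

open Matrix
open scoped Matrix
open scoped MatrixOrder

private lemma aux_log (x : ℝ) (h0 : 0 ≤ x) (h1 : x ≤ 1) : x ≤ 2 * Real.log (1 + x) := by
  have hx : (0:ℝ) < 1 + x := by linarith
  have h := Real.log_le_sub_one_of_pos (show (0:ℝ) < (1+x)⁻¹ by positivity)
  rw [Real.log_inv] at h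
  have hinv : (1+x) * (1+x)⁻¹ = 1 := mul_inv_cancel₀ hx.ne'
  nlinarith [Real.log_nonneg (by linarith : (1:ℝ) ≤ 1 + x)]

/-- Single-step log-determinant potential inequality: if `M ⪰ I` and `0 ⪯ G ⪯ I`, then
`trace (G * M⁻¹) ≤ 2 * (log det (M + G) - log det M)`. -/
theorem stmt_0 (d : ℕ) (hd : 0 < d) (M G : Matrix (Fin d) (Fin d) ℝ)
    (hM : (M - 1).PosSemidef) (hG : G.PosSemidef) (hG1 : ((1 : Matrix (Fin d) (Fin d) ℝ) - G).PosSemidef) :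
    Matrix.trace (G * M⁻¹) ≤ 2 * (Real.log (M + G).det - Real.log M.det) := by
  have hMpd : M.PosDef := by
    have := Matrix.PosDef.posSemidef_add hM (Matrix.PosDef.one (n := Fin d) (R := ℝ))
    rwa [sub_add_cancel] at this
  set S := CFC.sqrt M with hSdef
  have hSps : S.PosSemidef := (CFC.sqrt_nonneg M).posSemidef
  have hSS : S * S = M := CFC.sqrt_mul_sqrt_self M hMpd.posSemidef.nonneg
  have hdetM : 0 < M.det := hMpd.det_pos
  have hdetS : S.det ≠ 0 := by
    intro h
    rw [← hSS, Matrix.det_mul, h, mul_zero] at hdetM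
    exact lt_irrefl _ hdetM
  have hSinv : S * S⁻¹ = 1 := Matrix.mul_nonsing_inv S hdetS.isUnit
  have hinvS : S⁻¹ * S = 1 := Matrix.nonsing_inv_mul S hdetS.isUnit
  have hSinvH : S⁻¹ᴴ = S⁻¹ := by
    rw [Matrix.conjTranspose_nonsing_inv, hSps.1.eq]
  set N := S⁻¹ * G * S⁻¹ with hNdef
  -- N is PSD
  have hNps : N.PosSemidef := by
    have := hG.conjTranspose_mul_mul_same S⁻¹
    rwa [hSinvH] at this
  have hN : N.IsHermitian := hNps.1
  -- 1 - N is PSD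
  have hMG : (M - G).PosSemidef := by
    have := hM.add hG1
    rwa [show M - 1 + (1 - G) = M - G by abel] at this
  have h1N : ((1 : Matrix (Fin d) (Fin d) ℝ) - N).PosSemidef := by
    have h := hMG.conjTranspose_mul_mul_same S⁻¹
    rw [hSinvH] at h
    have : S⁻¹ * (M - G) * S⁻¹ = 1 - N := by
      rw [Matrix.mul_sub, Matrix.sub_mul, hNdef, ← hSS, ← mul_assoc, hinvS, one_mul, hSinv]
    rwa [this] at h
  -- trace (G * M⁻¹) = trace N
  have hMinv : M⁻¹ = S⁻¹ * S⁻¹ := by rw [← hSS, Matrix.mul_inv_rev]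
  have htr : Matrix.trace (G * M⁻¹) = Matrix.trace N := by
    rw [hMinv, hNdef, ← mul_assoc, Matrix.trace_mul_cycle]
  -- det (M + G) = det M * det (1 + N)
  have hdet : (M + G).det = M.det * ((1 : Matrix (Fin d) (Fin d) ℝ) + N).det := by
    have hMG' : M + G = S * ((1 : Matrix (Fin d) (Fin d) ℝ) + N) * S := by
      rw [Matrix.mul_add, Matrix.add_mul, mul_one, hSS, hNdef]
      rw [← mul_assoc, ← mul_assoc, hSinv, one_mul, mul_assoc, hinvS, mul_one]
    rw [hMG', Matrix.det_mul, Matrix.det_mul, ← hSS, Matrix.det_mul]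
    ring
  -- eigenvalues of N
  set μ := hN.eigenvalues with hμdef
  have hμ0 : ∀ i, 0 ≤ μ i := hNps.eigenvalues_nonneg
  have hμ1 : ∀ i, μ i ≤ 1 := by
    intro i
    set v : Fin d → ℝ := ⇑(hN.eigenvectorBasis i) with hv
    have hvv : dotProduct (star v) v = 1 := by
      have hnorm := hN.eigenvectorBasis.orthonormal.1 i
      have := EuclideanSpace.inner_eq_star_dotProduct (hN.eigenvectorBasis i)
        (hN.eigenvectorBasis i)
      rw [real_inner_self_eq_norm_sq, hnorm] at this
      simpa using this.symm
    have hNe := hN.mulVec_eigenvectorBasis i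
    have h := h1N.dotProduct_mulVec_nonneg v
    rw [Matrix.sub_mulVec, Matrix.one_mulVec, hNe] at h
    have : dotProduct (star v) (v - μ i • v) = 1 - μ i := by
      rw [dotProduct_sub, dotProduct_smul, hvv]
      simp
    rw [this] at h
    linarith
  -- trace N = ∑ μ
  have htrN : Matrix.trace N = ∑ i, μ i := by
    conv_lhs => rw [hN.spectral_theorem, Unitary.conjStarAlgAut_apply]
    rw [Matrix.trace_mul_cycle, Matrix.UnitaryGroup.star_mul_self, one_mul,
      Matrix.trace_diagonal]
    simp [hμdef]
  -- det (1 + N) = ∏ (1 + μ i)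
  have hdet1N : ((1 : Matrix (Fin d) (Fin d) ℝ) + N).det = ∏ i, (1 + μ i) := by
    have hU : ((1 : Matrix (Fin d) (Fin d) ℝ) + N) =
        (hN.eigenvectorUnitary : Matrix (Fin d) (Fin d) ℝ) *
          (1 + Matrix.diagonal (RCLike.ofReal ∘ μ)) *
          (star hN.eigenvectorUnitary : Matrix (Fin d) (Fin d) ℝ) := by
      rw [Matrix.mul_add, Matrix.add_mul, mul_one,
        show (hN.eigenvectorUnitary : Matrix (Fin d) (Fin d) ℝ) * (star hN.eigenvectorUnitary : Matrix (Fin d) (Fin d) ℝ) = 1 from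
          Matrix.mem_unitaryGroup_iff.mp hN.eigenvectorUnitary.2]
      conv_lhs => rw [hN.spectral_theorem, Unitary.conjStarAlgAut_apply]
    rw [hU, Matrix.det_mul, Matrix.det_mul, mul_comm, ← mul_assoc, ← Matrix.det_mul,
      Matrix.UnitaryGroup.star_mul_self, Matrix.det_one, one_mul]
    rw [← Matrix.diagonal_one, Matrix.diagonal_add, Matrix.det_diagonal]
    simp
  -- positivity of factors
  have hpos : ∀ i ∈ Finset.univ, (0:ℝ) < 1 + μ i := fun i _ => by linarith [hμ0 i]
  have hdet1Npos : (0:ℝ) < ((1 : Matrix (Fin d) (Fin d) ℝ) + N).det := by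
    rw [hdet1N]; exact Finset.prod_pos hpos
  -- rewrite RHS
  have hlog : Real.log (M + G).det - Real.log M.det =
      Real.log ((1 : Matrix (Fin d) (Fin d) ℝ) + N).det := by
    rw [hdet, Real.log_mul hdetM.ne' hdet1Npos.ne']
    ring
  rw [htr, htrN, hlog, hdet1N,
    Real.log_prod (fun i _ => (hpos i (Finset.mem_univ i)).ne'),
    Finset.mul_sum]
  exact Finset.sum_le_sum fun i _ => aux_log (μ i) (hμ0 i) (hμ1 i)
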